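/- Let I be w-sparse with 1-bits at positions ind_1 < ... < ind_h, and V = Σ_i k_i <<< ind_i, U = Σ_i k'_i <<< ind_i with k_i, k'_i < 2^{w-1} (flag bits clear). Define GT(V,U,I,w) = carry-extraction as in the paper; then the result equals Σ_i c_i <<< ind_i where c_i = 1 if k_i > k'_i and c_i = 0 otherwise. Consequently EQ(V,U,I,w) := I - GT(V,U,I,w) - GT(U,V,I,w) equals Σ_i e_i <<< ind_i where e_i = 1 iff k_i = k'_i. -/

import Mathlib

/-- `MASK(I,w) = (I <<< w) - I`. -/
def MASKm (I w : ℕ) : ℕ := (I <<< w) - I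

/-- Positions of the flag bits (MSB of each element). -/
def FLAGSd (I w : ℕ) : ℕ := I <<< (w - 1)

/-- Positions of the data bits (lowest `w-1` bits of each element). -/
def DATAd (I w : ℕ) : ℕ := FLAGSd I w - I

def FLAGSm (V I w : ℕ) : ℕ := V &&& FLAGSd I w

def DATAm (V I w : ℕ) : ℕ := V &&& DATAd I w

/-- Element-wise sum modulo `2^w`. -/
def ADDm (V U I w : ℕ) : ℕ :=
  (DATAm V I w + DATAm U I w) ^^^ FLAGSm V I w ^^^ FLAGSm U I w

/-- Element-wise carry bits of `V + U` at width `w`. -/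
def CARRYm (V U I w : ℕ) : ℕ := (V + U - ADDm V U I w) >>> w

/-- Element-wise bitwise complement within `w` bits. -/
def NEGm (U I w : ℕ) : ℕ := MASKm I w - U

/-- Element-wise "greater than" via carry extraction. -/
def GTm (V U I w : ℕ) : ℕ := CARRYm V (NEGm U I w) I w

/-- Element-wise equality test. -/
def EQm (V U I w : ℕ) : ℕ := I - GTm V U I w - GTm U V I w

namespace MapGTAux

lemma sum_tsub {h : ℕ} (f g : Fin h → ℕ) (hle : ∀ i, g i ≤ f i) :
    (∑ i, f i) - (∑ i, g i) = ∑ i, (f i - g i) := by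
  have h1 : ∑ i, f i = (∑ i, (f i - g i)) + ∑ i, g i := by
    rw [← Finset.sum_add_distrib]
    exact Finset.sum_congr rfl fun i _ => by have := hle i; omega
  omega

lemma sum_sub_sum {h : ℕ} (ind f g : Fin h → ℕ) (hle : ∀ i, g i ≤ f i) :
    (∑ j, f j * 2 ^ ind j) - (∑ j, g j * 2 ^ ind j) = ∑ j, (f j - g j) * 2 ^ ind j := by
  rw [sum_tsub _ _ (fun i => Nat.mul_le_mul_right _ (hle i))]
  exact Finset.sum_congr rfl fun j _ => (Nat.sub_mul _ _ _).symm

lemma sum_add_sum {h : ℕ} (ind f g : Fin h → ℕ) :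
    (∑ j, f j * 2 ^ ind j) + (∑ j, g j * 2 ^ ind j) = ∑ j, (f j + g j) * 2 ^ ind j := by
  rw [← Finset.sum_add_distrib]
  exact Finset.sum_congr rfl fun j _ => (add_mul _ _ _).symm

lemma block_op (op : ℕ → ℕ → ℕ) (f : Bool → Bool → Bool)
    (hop : ∀ x y i, (op x y).testBit i = f (x.testBit i) (y.testBit i))
    (hf : f false false = false)
    {n x x' : ℕ} (q q' : ℕ) (hx : x < 2 ^ n) (hx' : x' < 2 ^ n) :
    op (2 ^ n * q + x) (2 ^ n * q' + x') = 2 ^ n * op q q' + op x x' := by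
  have hxx : op x x' < 2 ^ n := by
    apply Nat.lt_pow_two_of_testBit
    intro i hi
    have h2 : (2:ℕ) ^ n ≤ 2 ^ i := Nat.pow_le_pow_right (by norm_num) hi
    rw [hop, Nat.testBit_lt_two_pow (lt_of_lt_of_le hx h2),
        Nat.testBit_lt_two_pow (lt_of_lt_of_le hx' h2), hf]
  apply Nat.eq_of_testBit_eq
  intro i
  rw [hop, Nat.testBit_two_pow_mul_add _ hx, Nat.testBit_two_pow_mul_add _ hx',
      Nat.testBit_two_pow_mul_add _ hxx]
  split
  · rw [hop]
  · rw [hop]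

lemma mul_op (op : ℕ → ℕ → ℕ) (f : Bool → Bool → Bool)
    (hop : ∀ x y i, (op x y).testBit i = f (x.testBit i) (y.testBit i))
    (hf : f false false = false) (m a b : ℕ) :
    op (a * 2 ^ m) (b * 2 ^ m) = op a b * 2 ^ m := by
  have h0 : op 0 0 = 0 := Nat.eq_of_testBit_eq fun i => by simp [hop, hf]
  have := block_op op f hop hf (n := m) (x := 0) (x' := 0) a b
    (Nat.two_pow_pos _) (Nat.two_pow_pos _)
  simpa [h0, Nat.mul_comm] using this

lemma sum_op (op : ℕ → ℕ → ℕ) (f : Bool → Bool → Bool)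
    (hop : ∀ x y i, (op x y).testBit i = f (x.testBit i) (y.testBit i))
    (hf : f false false = false) (w : ℕ) :
    ∀ (h : ℕ) (ind : Fin h → ℕ)
      (_ : ∀ i j : Fin h, i < j → ind i + w ≤ ind j)
      (a b : Fin h → ℕ) (_ : ∀ i, a i < 2 ^ w) (_ : ∀ i, b i < 2 ^ w),
      op (∑ j, a j * 2 ^ ind j) (∑ j, b j * 2 ^ ind j) = ∑ j, op (a j) (b j) * 2 ^ ind j := by
  intro h
  induction h with
  | zero =>
    intro ind hgap a b ha hb
    have h0 : op 0 0 = 0 := Nat.eq_of_testBit_eq fun i => by simp [hop, hf]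
    simpa using h0
  | succ h ih =>
    intro ind hgap a b ha hb
    set n := ind 0 + w with hn
    have hle : ∀ j : Fin h, n ≤ ind j.succ := by
      intro j
      have := hgap 0 j.succ (Fin.succ_pos j)
      omega
    have tail : ∀ c : Fin (h+1) → ℕ,
        (∑ j : Fin h, c j.succ * 2 ^ ind j.succ)
          = 2 ^ n * ∑ j : Fin h, c j.succ * 2 ^ (ind j.succ - n) := by
      intro c
      rw [Finset.mul_sum]
      refine Finset.sum_congr rfl fun j _ => ?_
      have := hle j
      have hp : (2:ℕ) ^ ind j.succ = 2 ^ n * 2 ^ (ind j.succ - n) := by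
        rw [← Nat.pow_add]; congr 1; omega
      rw [hp]; ring
    have head : ∀ c : Fin (h+1) → ℕ, c 0 < 2 ^ w → c 0 * 2 ^ ind 0 < 2 ^ n := by
      intro c hc
      calc c 0 * 2 ^ ind 0 < 2 ^ w * 2 ^ ind 0 :=
            (Nat.mul_lt_mul_right (Nat.two_pow_pos _)).mpr hc
        _ = 2 ^ n := by rw [← Nat.pow_add]; congr 1; omega
    rw [Fin.sum_univ_succ, Fin.sum_univ_succ, Fin.sum_univ_succ,
        tail a, tail b, tail (fun j => op (a j) (b j))]
    rw [Nat.add_comm (a 0 * 2 ^ ind 0), Nat.add_comm (b 0 * 2 ^ ind 0),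
        block_op op f hop hf _ _ (head a (ha 0)) (head b (hb 0)),
        ih (fun j => ind j.succ - n)
          (fun i j hij => by
            have h1 := hgap i.succ j.succ (by simpa using hij)
            have h2 := hle i; have h3 := hle j; omega)
          (fun j => a j.succ) (fun j => b j.succ) (fun j => ha j.succ) (fun j => hb j.succ),
        mul_op op f hop hf]
    omega

lemma sum_land {h : ℕ} (w : ℕ) (ind : Fin h → ℕ)
    (hgap : ∀ i j : Fin h, i < j → ind i + w ≤ ind j)
    (a b : Fin h → ℕ) (ha : ∀ i, a i < 2 ^ w) (hb : ∀ i, b i < 2 ^ w) :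
    (∑ j, a j * 2 ^ ind j) &&& (∑ j, b j * 2 ^ ind j) = ∑ j, (a j &&& b j) * 2 ^ ind j :=
  sum_op (· &&& ·) (· && ·) Nat.testBit_and rfl w h ind hgap a b ha hb

lemma sum_xor {h : ℕ} (w : ℕ) (ind : Fin h → ℕ)
    (hgap : ∀ i j : Fin h, i < j → ind i + w ≤ ind j)
    (a b : Fin h → ℕ) (ha : ∀ i, a i < 2 ^ w) (hb : ∀ i, b i < 2 ^ w) :
    (∑ j, a j * 2 ^ ind j) ^^^ (∑ j, b j * 2 ^ ind j) = ∑ j, (a j ^^^ b j) * 2 ^ ind j :=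
  sum_op (· ^^^ ·) (xor) Nat.testBit_xor rfl w h ind hgap a b ha hb

lemma testBit_high {m s : ℕ} (h1 : 2 ^ m ≤ s) (h2 : s < 2 * 2 ^ m) : s.testBit m = true := by
  rw [Nat.testBit_eq_decide_div_mod_eq]
  have : s / 2 ^ m = 1 := Nat.div_eq_of_lt_le (by simpa using h1) (by omega)
  simp [this]

lemma xor_flag {m s : ℕ} (hs : s < 2 * 2 ^ m) :
    s ^^^ 2 ^ m = if s < 2 ^ m then s + 2 ^ m else s - 2 ^ m := by
  have hp : 0 < 2 ^ m := Nat.two_pow_pos m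
  have hb : s / 2 ^ m ≤ 1 := by
    have := Nat.div_lt_of_lt_mul (by omega : s < 2 ^ m * 2)
    omega
  have hdecomp : s = 2 ^ m * (s / 2 ^ m) + s % 2 ^ m := (Nat.div_add_mod s (2 ^ m)).symm
  have hr : s % 2 ^ m < 2 ^ m := Nat.mod_lt _ hp
  have key := block_op (· ^^^ ·) (xor) Nat.testBit_xor rfl
      (n := m) (x := s % 2 ^ m) (x' := 0) (s / 2 ^ m) 1 hr hp
  rw [Nat.mul_one, Nat.add_zero] at key
  simp only [Nat.xor_zero] at key
  rcases Nat.le_one_iff_eq_zero_or_eq_one.mp hb with hbv | hbv <;>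
    rw [hbv] at key hdecomp <;> rw [hdecomp, key]
  · rw [show (0:ℕ) ^^^ 1 = 1 from rfl, if_pos (by omega)]
    omega
  · rw [show (1:ℕ) ^^^ 1 = 0 from rfl, if_neg (by omega)]
    omega

lemma gt_main (w h : ℕ) (hw : 2 ≤ w) (ind : Fin h → ℕ)
    (hgap : ∀ i j : Fin h, i < j → ind i + w ≤ ind j)
    (k k' : Fin h → ℕ) (hk : ∀ i, k i < 2 ^ (w - 1)) (hk' : ∀ i, k' i < 2 ^ (w - 1)) :
    GTm (∑ j, k j * 2 ^ ind j) (∑ j, k' j * 2 ^ ind j) (∑ j, 1 * 2 ^ ind j) w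
      = ∑ j, (if k' j < k j then 1 else 0) * 2 ^ ind j := by
  have hwp : (2:ℕ) ^ w = 2 * 2 ^ (w - 1) := by
    rw [← pow_succ']; congr 1; omega
  have hp0 : (0:ℕ) < 2 ^ (w - 1) := Nat.two_pow_pos _
  -- MASK
  have hI : MASKm (∑ j, 1 * 2 ^ ind j) w = ∑ j, (2 ^ w - 1) * 2 ^ ind j := by
    unfold MASKm
    rw [Nat.shiftLeft_eq, Finset.sum_mul]
    have e1 : (∑ j : Fin h, 1 * 2 ^ ind j * 2 ^ w) = ∑ j : Fin h, 2 ^ w * 2 ^ ind j :=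
      Finset.sum_congr rfl fun j _ => by ring
    rw [e1, sum_sub_sum ind _ _ (fun i => by omega)]
  -- NEG U
  have hN : NEGm (∑ j, k' j * 2 ^ ind j) (∑ j, 1 * 2 ^ ind j) w
      = ∑ j, (2 ^ w - 1 - k' j) * 2 ^ ind j := by
    unfold NEGm
    rw [hI, sum_sub_sum ind _ _ (fun i => by have := hk' i; omega)]
  -- FLAGSd / DATAd
  have hF : FLAGSd (∑ j, 1 * 2 ^ ind j) w = ∑ j, 2 ^ (w - 1) * 2 ^ ind j := by
    unfold FLAGSd
    rw [Nat.shiftLeft_eq, Finset.sum_mul]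
    exact Finset.sum_congr rfl fun j _ => by ring
  have hD : DATAd (∑ j, 1 * 2 ^ ind j) w = ∑ j, (2 ^ (w - 1) - 1) * 2 ^ ind j := by
    unfold DATAd
    rw [hF, sum_sub_sum ind _ _ (fun i => by omega)]
  -- bounds
  have hbk : ∀ i, k i < 2 ^ w := fun i => by have := hk i; omega
  have hbn : ∀ i : Fin h, 2 ^ w - 1 - k' i < 2 ^ w := fun i => by have := hk' i; omega
  have hbd : ∀ _ : Fin h, 2 ^ (w - 1) - 1 < 2 ^ w := fun _ => by omega
  have hbf : ∀ _ : Fin h, 2 ^ (w - 1) < 2 ^ w := fun _ => by omega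
  unfold GTm CARRYm ADDm FLAGSm DATAm
  rw [hN, hF, hD]
  rw [sum_land w ind hgap k _ hbk hbd,
      sum_land w ind hgap _ _ hbn hbd,
      sum_land w ind hgap k _ hbk hbf,
      sum_land w ind hgap _ _ hbn hbf]
  -- simplify the four AND-sums
  have eDV : (∑ j, (k j &&& (2 ^ (w - 1) - 1)) * 2 ^ ind j) = ∑ j, k j * 2 ^ ind j :=
    Finset.sum_congr rfl fun j _ => by
      rw [Nat.and_two_pow_sub_one_of_lt_two_pow (hk j)]
  have eDN : (∑ j, ((2 ^ w - 1 - k' j) &&& (2 ^ (w - 1) - 1)) * 2 ^ ind j)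
      = ∑ j, (2 ^ (w - 1) - 1 - k' j) * 2 ^ ind j :=
    Finset.sum_congr rfl fun j _ => by
      have hk'j := hk' j
      rw [Nat.and_two_pow_sub_one_eq_mod,
          show 2 ^ w - 1 - k' j = 2 ^ (w - 1) + (2 ^ (w - 1) - 1 - k' j) by omega,
          Nat.add_mod_left, Nat.mod_eq_of_lt (by omega)]
  have eFV : (∑ j, (k j &&& 2 ^ (w - 1)) * 2 ^ ind j) = 0 := by
    have : ∀ j : Fin h, k j &&& 2 ^ (w - 1) = 0 := fun j => by
      rw [Nat.and_two_pow, Nat.testBit_lt_two_pow (hk j)]; simp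
    simp [this]
  have eFN : (∑ j, ((2 ^ w - 1 - k' j) &&& 2 ^ (w - 1)) * 2 ^ ind j)
      = ∑ j, 2 ^ (w - 1) * 2 ^ ind j :=
    Finset.sum_congr rfl fun j _ => by
      have hk'j := hk' j
      rw [Nat.and_two_pow, testBit_high (by omega) (by omega)]
      simp
  rw [eDV, eDN, eFV, eFN, Nat.xor_zero]
  rw [sum_add_sum, sum_add_sum]
  rw [sum_xor w ind hgap _ _ (fun i => by have := hk i; have := hk' i; omega) hbf]
  have eADJ : (∑ j, ((k j + (2 ^ (w - 1) - 1 - k' j)) ^^^ 2 ^ (w - 1)) * 2 ^ ind j)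
      = ∑ j, (if k' j < k j then k j + (2 ^ (w - 1) - 1 - k' j) - 2 ^ (w - 1)
              else k j + (2 ^ (w - 1) - 1 - k' j) + 2 ^ (w - 1)) * 2 ^ ind j :=
    Finset.sum_congr rfl fun j _ => by
      have hkj := hk j; have hk'j := hk' j
      rw [xor_flag (by omega)]
      split_ifs <;> omega
  rw [eADJ,
      sum_sub_sum ind _ _ (fun i => by have := hk i; have := hk' i; split_ifs <;> omega)]
  have eC : (∑ j, ((k j + (2 ^ w - 1 - k' j)) -
        (if k' j < k j then k j + (2 ^ (w - 1) - 1 - k' j) - 2 ^ (w - 1)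
         else k j + (2 ^ (w - 1) - 1 - k' j) + 2 ^ (w - 1))) * 2 ^ ind j)
      = 2 ^ w * ∑ j, (if k' j < k j then 1 else 0) * 2 ^ ind j := by
    rw [Finset.mul_sum]
    refine Finset.sum_congr rfl fun j _ => ?_
    have hkj := hk j; have hk'j := hk' j
    have hcoeff : (k j + (2 ^ w - 1 - k' j)) -
        (if k' j < k j then k j + (2 ^ (w - 1) - 1 - k' j) - 2 ^ (w - 1)
         else k j + (2 ^ (w - 1) - 1 - k' j) + 2 ^ (w - 1))
        = (if k' j < k j then 1 else 0) * 2 ^ w := by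
      split_ifs <;> omega
    rw [hcoeff]; ring
  rw [eC, Nat.shiftRight_eq_div_pow, Nat.mul_div_cancel_left _ (Nat.two_pow_pos w)]

end MapGTAux

theorem map_gt_eq (w h : ℕ) (hw : 2 ≤ w) (ind : Fin h → ℕ)
    (hgap : ∀ i j : Fin h, i < j → ind i + w ≤ ind j)
    (k k' : Fin h → ℕ) (hk : ∀ i, k i < 2 ^ (w - 1)) (hk' : ∀ i, k' i < 2 ^ (w - 1)) :
    GTm (∑ j : Fin h, k j <<< ind j) (∑ j : Fin h, k' j <<< ind j)
        (∑ j : Fin h, 2 ^ ind j) w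
      = ∑ j : Fin h, (if k' j < k j then 1 else 0) <<< ind j ∧
    EQm (∑ j : Fin h, k j <<< ind j) (∑ j : Fin h, k' j <<< ind j)
        (∑ j : Fin h, 2 ^ ind j) w
      = ∑ j : Fin h, (if k j = k' j then 1 else 0) <<< ind j := by
  have hconv : ∀ f : Fin h → ℕ, (∑ j : Fin h, f j <<< ind j) = ∑ j, f j * 2 ^ ind j :=
    fun f => Finset.sum_congr rfl fun j _ => Nat.shiftLeft_eq _ _
  have hIc : (∑ j : Fin h, 2 ^ ind j) = ∑ j : Fin h, 1 * 2 ^ ind j :=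
    Finset.sum_congr rfl fun j _ => (one_mul _).symm
  have hGT1 := MapGTAux.gt_main w h hw ind hgap k k' hk hk'
  have hGT2 := MapGTAux.gt_main w h hw ind hgap k' k hk' hk
  constructor
  · rw [hconv, hconv, hconv, hIc, hGT1]
  · rw [hconv k, hconv k', hconv, hIc]
    unfold EQm
    rw [hGT1, hGT2]
    rw [MapGTAux.sum_sub_sum ind _ _ (fun i => by split_ifs <;> omega),
        MapGTAux.sum_sub_sum ind _ _ (fun i => by split_ifs <;> omega)]
    exact Finset.sum_congr rfl fun j _ => by split_ifs <;> omega
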